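/- Let p ≥ 2 be an integer and (t0, t1, ..., t_{p-1}) an ordered non-negative p-partition of n with t_i = t_{p-i} for 1 ≤ i ≤ ⌊p/2⌋ and Σ_{i=0}^{p-1} i·t_i ≡ 0 (mod p). Then the map φ : (Z/pZ)^{n-1} → (Z/pZ)^n sending x to (x, -x·1) (appending the negative of the coordinate sum) is a graph homomorphism from H = Cay((Z/pZ)^{n-1}, S) to G = Cay((Z/pZ)^n, T), where T is the set of vectors of type (t0,...,t_{p-1}) in (Z/pZ)^n and S is the union over j of sets of vectors of type (t0,...,t_j - 1,...,t_{p-1}) in (Z/pZ)^{n-1}. Conversely, projection onto the first n-1 coordinates is a graph homomorphism G → H. -/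
import Mathlib

open Finset

/-- Number of coordinates of `v` equal to `i` (the type of `v`). -/
def typeCountP {p m : ℕ} (v : Fin m → ZMod p) (i : ZMod p) : ℕ :=
  (Finset.univ.filter (fun j => v j = i)).card

/-- Appending the negative of the coordinate sum (a check digit). -/
def phiMap (p n : ℕ) (x : Fin (n - 1) → ZMod p) : Fin n → ZMod p :=
  fun i => if h : (i : ℕ) < n - 1 then x ⟨i, h⟩ else -(∑ j, x j)

/-- Projection onto the first `n-1` coordinates. -/
def projMap (p n : ℕ) (y : Fin n → ZMod p) : Fin (n - 1) → ZMod p :=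
  fun j => y (Fin.castLE (Nat.sub_le n 1) j)

lemma typeCount_split {p m : ℕ} (v : Fin (m + 1) → ZMod p) (i : ZMod p) :
    typeCountP v i
      = typeCountP (fun j : Fin m => v j.castSucc) i
        + (if v (Fin.last m) = i then 1 else 0) := by
  simp only [typeCountP, Finset.card_filter]
  rw [Fin.sum_univ_castSucc]

lemma typeCount_total {p m : ℕ} [NeZero p] (v : Fin m → ZMod p) :
    ∑ c : ZMod p, typeCountP v c = m := by
  have h := Finset.card_eq_sum_card_fiberwise
    (s := (Finset.univ : Finset (Fin m))) (t := (Finset.univ : Finset (ZMod p)))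
    (f := v) (fun x _ => Finset.mem_univ _)
  simpa [typeCountP] using h.symm

lemma sum_eq_typeCount_sum {p m : ℕ} [NeZero p] (v : Fin m → ZMod p) :
    ∑ j, v j = ∑ c : ZMod p, c * (typeCountP v c : ZMod p) := by
  rw [← Finset.sum_fiberwise (Finset.univ : Finset (Fin m)) v v]
  refine Finset.sum_congr rfl fun c _ => ?_
  rw [Finset.sum_congr rfl (fun j hj => (Finset.mem_filter.mp hj).2)]
  simp [typeCountP, mul_comm]

theorem stmt11 (p n : ℕ) [NeZero p] (hp : 2 ≤ p) (hn : 1 ≤ n)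
    (t : ZMod p → ℕ) (hsum : ∑ i, t i = n)
    (hsymm : ∀ i : ZMod p, t (-i) = t i)
    (hcong : (∑ i : ZMod p, (i.val * t i)) % p = 0) :
    (∀ x y : Fin (n - 1) → ZMod p,
      (∃ j : ZMod p, ∀ i : ZMod p,
          typeCountP (x - y) i = t i - (if i = j then 1 else 0)) →
      (∀ i : ZMod p, typeCountP (phiMap p n x - phiMap p n y) i = t i)) ∧
    (∀ x y : Fin n → ZMod p,
      (∀ i : ZMod p, typeCountP (x - y) i = t i) →
      (∃ j : ZMod p, ∀ i : ZMod p,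
          typeCountP (projMap p n x - projMap p n y) i
            = t i - (if i = j then 1 else 0))) := by
  obtain ⟨m, rfl⟩ : ∃ m, n = m + 1 := ⟨n - 1, (Nat.succ_pred_eq_of_pos hn).symm⟩
  -- congruence in ZMod p
  have hcongz : ∑ c : ZMod p, c * (t c : ZMod p) = 0 := by
    have : ((∑ i : ZMod p, (i.val * t i) : ℕ) : ZMod p) = 0 := by
      rw [← Nat.dvd_iff_mod_eq_zero] at hcong
      exact (ZMod.natCast_eq_zero_iff _ _).mpr hcong
    rw [Nat.cast_sum] at this
    rw [← this]
    exact Finset.sum_congr rfl fun c _ => by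
      push_cast [ZMod.natCast_val, ZMod.cast_id] ; ring
  constructor
  · rintro x y ⟨j, hj⟩ i
    set d : Fin (m + 1 - 1) → ZMod p := x - y with hd
    -- t j ≥ 1
    have htot : ∑ c : ZMod p, typeCountP d c = m := typeCount_total d
    have hsplit1 : typeCountP d j + ∑ c ∈ Finset.univ.erase j, typeCountP d c
        = ∑ c : ZMod p, typeCountP d c := Finset.add_sum_erase _ _ (Finset.mem_univ j)
    have hsplit2 : t j + ∑ c ∈ Finset.univ.erase j, t c = ∑ c : ZMod p, t c :=
      Finset.add_sum_erase _ _ (Finset.mem_univ j)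
    have herase : ∑ c ∈ Finset.univ.erase j, typeCountP d c
        = ∑ c ∈ Finset.univ.erase j, t c := by
      refine Finset.sum_congr rfl fun c hc => ?_
      have : c ≠ j := (Finset.mem_erase.mp hc).1
      simpa [this] using hj c
    have hjj : typeCountP d j = t j - 1 := by simpa using hj j
    have htj : 1 ≤ t j := by
      by_contra h
      have htj0 : t j = 0 := by omega
      omega
    -- compute sum of d
    have hsumd : ∑ k, d k = -j := by
      rw [sum_eq_typeCount_sum d]
      have e1 : ∑ c : ZMod p, c * (typeCountP d c : ZMod p)
          = j * ((typeCountP d j : ℕ) : ZMod p)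
            + ∑ c ∈ Finset.univ.erase j, c * (t c : ZMod p) := by
        rw [← Finset.add_sum_erase _ (fun c => c * (typeCountP d c : ZMod p))
          (Finset.mem_univ j)]
        congr 1
        refine Finset.sum_congr rfl fun c hc => ?_
        have hcj : c ≠ j := (Finset.mem_erase.mp hc).1
        have := hj c
        simp [hcj] at this
        rw [this]
      have e2 : ∑ c ∈ Finset.univ.erase j, c * (t c : ZMod p)
          = - (j * (t j : ZMod p)) := by
        have := Finset.add_sum_erase (Finset.univ : Finset (ZMod p))
          (fun c => c * (t c : ZMod p)) (Finset.mem_univ j)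
        rw [hcongz] at this
        linear_combination this
      rw [e1, e2, hjj, Nat.cast_sub htj]
      push_cast
      ring
    -- identify the difference function
    have hfun : ∀ k : Fin m,
        (phiMap p (m+1) x - phiMap p (m+1) y) k.castSucc = d k := by
      intro k
      have hk : (k.castSucc : ℕ) < m + 1 - 1 := k.isLt
      simp only [Pi.sub_apply, phiMap, dif_pos hk]
      rfl
    have hlast : (phiMap p (m+1) x - phiMap p (m+1) y) (Fin.last m) = j := by
      have hk : ¬ ((Fin.last m : Fin (m+1)) : ℕ) < m + 1 - 1 := by simp
      simp only [Pi.sub_apply, phiMap, dif_neg hk]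
      have : -(∑ k, x k) - -(∑ k, y k) = -(∑ k, d k) := by
        simp only [hd, Pi.sub_apply, Finset.sum_sub_distrib]; ring
      rw [this, hsumd, neg_neg]
    rw [typeCount_split, hlast]
    have hcnt : typeCountP (fun k : Fin m =>
        (phiMap p (m+1) x - phiMap p (m+1) y) k.castSucc) i = typeCountP d i := by
      unfold typeCountP
      congr 1
      exact Finset.filter_congr fun k _ => by simp only [hfun]
    rw [hcnt, hj i]
    by_cases hij : i = j
    · subst hij
      simp
      omega
    · have hji : ¬ (j = i) := fun h => hij h.symm
      simp [hij, hji]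
  · intro x y hxy
    set d : Fin (m + 1) → ZMod p := x - y with hd
    refine ⟨d (Fin.last m), fun i => ?_⟩
    have hcnt : typeCountP (projMap p (m+1) x - projMap p (m+1) y) i
        = typeCountP (fun k : Fin m => d k.castSucc) i := by
      unfold typeCountP
      congr 1
    have hsplit := typeCount_split d i
    rw [hxy i] at hsplit
    rw [hcnt]
    by_cases hij : i = d (Fin.last m)
    · simp [hij] at hsplit ⊢; omega
    · have : d (Fin.last m) ≠ i := fun h => hij h.symm
      simp [hij, this] at hsplit ⊢; omega
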